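/- arXiv:2512.17737 — 2 statements merged into one kernel-verified Lean document; each statement's English description precedes it below -/
import Mathlib

section
/- Fix a time t with 0 ≤ t ≤ T. The maximum of the objective G over all paths x : {0,…,T} → X equals the maximum, over all partial paths (x_t,…,x_T) ∈ X^{T−t+1}, of W_t(x_t) + Σ_{s=t+1}^{T} γ_s(x_s, x_{s−1}), where W_t is the forward value function. (Paper's Lemma 2, backward mode decomposition.) -/
open Finset

/-- The objective `G` of the modal path problem; here `γ s` plays the role of the
paper's `γ_{s+1}` (transition score from time `s` to time `s+1`). -/
noncomputable def pathObj {X : Type*} {T : ℕ} (γ0 : X → ℝ) (γ : Fin T → X → X → ℝ)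
    (x : Fin (T + 1) → X) : ℝ :=
  γ0 (x 0) + ∑ s : Fin T, γ s (x s.succ) (x s.castSucc)

/-- The backward value function `V_t(x)`: the maximum of `∑_{s=t+1}^{T} γ_s(x_s, x_{s-1})`
over all choices of `x_{t+1}, …, x_T`, with `x_t = x` (the summand only depends on the
path from time `t` onwards). In particular `V_T = 0`. -/
noncomputable def backVal {X : Type*} [Fintype X] [Nonempty X] {T : ℕ}
    (γ : Fin T → X → X → ℝ) (t : Fin (T + 1)) (x : X) : ℝ :=
  ⨆ z : { z : Fin (T + 1) → X // z t = x },
    ∑ s ∈ Finset.univ.filter (fun s : Fin T => (t : ℕ) ≤ (s : ℕ)),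
      γ s (z.1 s.succ) (z.1 s.castSucc)

/-- The forward value function `W_t(x)`: the maximum of
`γ_0(x_0) + ∑_{s=1}^{t} γ_s(x_s, x_{s-1})` over all choices of `x_0, …, x_{t-1}`,
with `x_t = x` (the expression only depends on the path up to time `t`).
In particular `W_0 = γ_0`. -/
noncomputable def fwdVal {X : Type*} [Fintype X] [Nonempty X] {T : ℕ}
    (γ0 : X → ℝ) (γ : Fin T → X → X → ℝ) (t : Fin (T + 1)) (x : X) : ℝ :=
  ⨆ z : { z : Fin (T + 1) → X // z t = x },
    (γ0 (z.1 0) +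
      ∑ s ∈ Finset.univ.filter (fun s : Fin T => (s : ℕ) < (t : ℕ)),
        γ s (z.1 s.succ) (z.1 s.castSucc))
/-- **Lemma 2 (backward mode decomposition).** For any `0 ≤ t ≤ T`, the maximum of `G`
over all paths equals the maximum over partial paths `(x_t, …, x_T)` of
`W_t(x_t) + ∑_{s=t+1}^{T} γ_s(x_s, x_{s-1})` (the quantity maximized depends only on
the path from time `t` onwards). -/
theorem forward_value_backward_mode_decomposition
    {X : Type*} [Fintype X] [Nonempty X] {T : ℕ}
    (γ0 : X → ℝ) (γ : Fin T → X → X → ℝ) (t : Fin (T + 1)) :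
    (⨆ x : Fin (T + 1) → X, pathObj γ0 γ x) =
      ⨆ z : Fin (T + 1) → X,
        (fwdVal γ0 γ t (z t) +
          ∑ s ∈ Finset.univ.filter (fun s : Fin T => (t : ℕ) ≤ (s : ℕ)),
            γ s (z s.succ) (z s.castSucc)) := by
  have hsplit : ∀ x : Fin (T + 1) → X,
      pathObj γ0 γ x =
        (γ0 (x 0) + ∑ s ∈ Finset.univ.filter (fun s : Fin T => (s : ℕ) < (t : ℕ)),
            γ s (x s.succ) (x s.castSucc)) +
        ∑ s ∈ Finset.univ.filter (fun s : Fin T => (t : ℕ) ≤ (s : ℕ)),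
            γ s (x s.succ) (x s.castSucc) := by
    intro x
    unfold pathObj
    rw [add_assoc]
    congr 1
    rw [← Finset.sum_filter_add_sum_filter_not Finset.univ (fun s : Fin T => (s : ℕ) < (t : ℕ))]
    congr 1
    apply Finset.sum_congr _ (fun _ _ => rfl)
    ext s
    simp [not_lt]
  apply le_antisymm
  · apply ciSup_le
    intro x
    rw [hsplit x]
    have h1 : (γ0 (x 0) + ∑ s ∈ Finset.univ.filter (fun s : Fin T => (s : ℕ) < (t : ℕ)),
        γ s (x s.succ) (x s.castSucc)) ≤ fwdVal γ0 γ t (x t) := by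
      exact le_ciSup (f := fun w : { z : Fin (T + 1) → X // z t = x t } =>
          γ0 (w.1 0) + ∑ s ∈ Finset.univ.filter (fun s : Fin T => (s : ℕ) < (t : ℕ)),
            γ s (w.1 s.succ) (w.1 s.castSucc))
        (Set.Finite.bddAbove (Set.finite_range _)) ⟨x, rfl⟩
    calc _ ≤ fwdVal γ0 γ t (x t) +
          ∑ s ∈ Finset.univ.filter (fun s : Fin T => (t : ℕ) ≤ (s : ℕ)),
            γ s (x s.succ) (x s.castSucc) := by gcongr
      _ ≤ _ := le_ciSup (f := fun z : Fin (T + 1) → X =>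
          fwdVal γ0 γ t (z t) +
            ∑ s ∈ Finset.univ.filter (fun s : Fin T => (t : ℕ) ≤ (s : ℕ)),
              γ s (z s.succ) (z s.castSucc))
        (Set.Finite.bddAbove (Set.finite_range _)) x
  · apply ciSup_le
    intro z
    haveI : Nonempty { w : Fin (T + 1) → X // w t = z t } := ⟨⟨z, rfl⟩⟩
    unfold fwdVal
    rw [ciSup_add (Set.Finite.bddAbove (Set.finite_range _))]
    apply ciSup_le
    intro w
    -- spliced path
    set y : Fin (T + 1) → X := fun s => if (s : ℕ) ≤ (t : ℕ) then w.1 s else z s with hy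
    have hobj : (γ0 (w.1 0) + ∑ s ∈ Finset.univ.filter (fun s : Fin T => (s : ℕ) < (t : ℕ)),
          γ s (w.1 s.succ) (w.1 s.castSucc)) +
        ∑ s ∈ Finset.univ.filter (fun s : Fin T => (t : ℕ) ≤ (s : ℕ)),
          γ s (z s.succ) (z s.castSucc) = pathObj γ0 γ y := by
      rw [hsplit y]
      congr 1
      · congr 1
        · apply Finset.sum_congr rfl
          intro s hs
          simp only [Finset.mem_filter] at hs
          have h1 : ((s.succ : Fin (T+1)) : ℕ) ≤ (t : ℕ) := by
            simp [Fin.val_succ]; omega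
          have h2 : ((s.castSucc : Fin (T+1)) : ℕ) ≤ (t : ℕ) := by
            simp [Fin.coe_castSucc]; omega
          rw [show y s.succ = w.1 s.succ from if_pos h1,
            show y s.castSucc = w.1 s.castSucc from if_pos h2]
      · apply Finset.sum_congr rfl
        intro s hs
        simp only [Finset.mem_filter] at hs
        have h1 : ¬ ((s.succ : Fin (T+1)) : ℕ) ≤ (t : ℕ) := by
          simp [Fin.val_succ]; omega
        rw [show y s.succ = z s.succ from if_neg h1]
        by_cases h2 : ((s.castSucc : Fin (T+1)) : ℕ) ≤ (t : ℕ)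
        · have heq : s.castSucc = t := by
            apply Fin.ext
            simp only [Fin.coe_castSucc] at *
            omega
          rw [show y s.castSucc = w.1 s.castSucc from if_pos h2, heq, w.2]
        · rw [show y s.castSucc = z s.castSucc from if_neg h2]
    rw [hobj]
    exact le_ciSup (f := fun x : Fin (T + 1) → X => pathObj γ0 γ x)
      (Set.Finite.bddAbove (Set.finite_range _)) y
end

section
/- Fix a time t with 0 ≤ t ≤ T. The maximum over x ∈ X of W_t(x) + V_t(x), the sum of the forward and backward value functions at time t, equals the maximum of the objective G over all paths x : {0,…,T} → X. (The value identity underlying the paper's Corollary 2, the 'two-filter' formula.) -/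
open Finset

lemma pathObj_split {X : Type*} {T : ℕ} (γ0 : X → ℝ) (γ : Fin T → X → X → ℝ)
    (t : Fin (T + 1)) (z : Fin (T + 1) → X) :
    pathObj γ0 γ z =
      (γ0 (z 0) +
        ∑ s ∈ Finset.univ.filter (fun s : Fin T => (s : ℕ) < (t : ℕ)),
          γ s (z s.succ) (z s.castSucc)) +
      ∑ s ∈ Finset.univ.filter (fun s : Fin T => (t : ℕ) ≤ (s : ℕ)),
        γ s (z s.succ) (z s.castSucc) := by
  rw [pathObj, add_assoc]
  congr 1
  rw [← Finset.sum_filter_add_sum_filter_not Finset.univ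
      (fun s : Fin T => (s : ℕ) < (t : ℕ))]
  congr 1
  apply Finset.sum_congr
  · ext s; simp [not_lt]
  · intros; rfl

/-- **Two-filter formula, value identity.** For any `0 ≤ t ≤ T`, the maximum over
`x` of `W_t(x) + V_t(x)` equals the maximum of the objective `G` over all paths. -/
theorem two_filter_value_identity
    {X : Type*} [Fintype X] [Nonempty X] {T : ℕ}
    (γ0 : X → ℝ) (γ : Fin T → X → X → ℝ) (t : Fin (T + 1)) :
    (⨆ x : X, (fwdVal γ0 γ t x + backVal γ t x)) =
      ⨆ z : Fin (T + 1) → X, pathObj γ0 γ z := by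
  have hS : BddAbove (Set.range (pathObj γ0 γ (X := X) (T := T))) :=
    Finite.bddAbove_range _
  apply le_antisymm
  · apply ciSup_le
    intro x
    have hne : Nonempty { z : Fin (T + 1) → X // z t = x } := ⟨⟨fun _ => x, rfl⟩⟩
    rw [fwdVal, backVal, ciSup_add (Finite.bddAbove_range _)]
    apply ciSup_le
    intro z1
    rw [add_ciSup (Finite.bddAbove_range _)]
    apply ciSup_le
    intro z2
    -- combined path
    set w : Fin (T + 1) → X := fun s => if (s : ℕ) ≤ (t : ℕ) then z1.1 s else z2.1 s with hw
    have hkey :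
        (γ0 (z1.1 0) +
          ∑ s ∈ Finset.univ.filter (fun s : Fin T => (s : ℕ) < (t : ℕ)),
            γ s (z1.1 s.succ) (z1.1 s.castSucc)) +
        ∑ s ∈ Finset.univ.filter (fun s : Fin T => (t : ℕ) ≤ (s : ℕ)),
          γ s (z2.1 s.succ) (z2.1 s.castSucc) = pathObj γ0 γ w := by
      rw [pathObj_split γ0 γ t w]
      congr 1
      · congr 1
        · apply Finset.sum_congr rfl
          intro s hs
          simp only [Finset.mem_filter] at hs
          have h1 : ((s.succ : Fin (T+1)) : ℕ) ≤ (t : ℕ) := by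
            simpa using Nat.succ_le_of_lt hs.2
          have h2 : ((s.castSucc : Fin (T+1)) : ℕ) ≤ (t : ℕ) := by
            simpa using Nat.le_of_lt hs.2
          simp only [hw]
          rw [if_pos h1, if_pos h2]
      · apply Finset.sum_congr rfl
        intro s hs
        simp only [Finset.mem_filter] at hs
        have h1 : ¬ ((s.succ : Fin (T+1)) : ℕ) ≤ (t : ℕ) := by
          simp only [Fin.val_succ]
          omega
        have hcs : w s.castSucc = z2.1 s.castSucc := by
          rcases lt_or_eq_of_le hs.2 with h | h
          · have : ¬ ((s.castSucc : Fin (T+1)) : ℕ) ≤ (t : ℕ) := by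
              simp only [Fin.coe_castSucc]; omega
            simp only [hw]; rw [if_neg this]
          · have ht : (s.castSucc : Fin (T+1)) = t := by
              apply Fin.ext; simpa using h.symm
            simp only [hw, ht]
            rw [if_pos (le_refl (t : ℕ)), z1.2, z2.2]
        rw [hcs]
        simp only [hw]
        rw [if_neg h1]
    rw [hkey]
    exact le_ciSup hS w
  · apply ciSup_le
    intro z
    rw [pathObj_split γ0 γ t z]
    have h1 : (γ0 (z 0) +
        ∑ s ∈ Finset.univ.filter (fun s : Fin T => (s : ℕ) < (t : ℕ)),
          γ s (z s.succ) (z s.castSucc)) ≤ fwdVal γ0 γ t (z t) := by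
      rw [fwdVal]
      exact le_ciSup (f := fun w : { w : Fin (T + 1) → X // w t = z t } =>
        γ0 (w.1 0) + ∑ s ∈ Finset.univ.filter (fun s : Fin T => (s : ℕ) < (t : ℕ)),
          γ s (w.1 s.succ) (w.1 s.castSucc)) (Finite.bddAbove_range _) ⟨z, rfl⟩
    have h2 : (∑ s ∈ Finset.univ.filter (fun s : Fin T => (t : ℕ) ≤ (s : ℕ)),
          γ s (z s.succ) (z s.castSucc)) ≤ backVal γ t (z t) := by
      rw [backVal]
      exact le_ciSup (f := fun w : { w : Fin (T + 1) → X // w t = z t } =>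
        ∑ s ∈ Finset.univ.filter (fun s : Fin T => (t : ℕ) ≤ (s : ℕ)),
          γ s (w.1 s.succ) (w.1 s.castSucc)) (Finite.bddAbove_range _) ⟨z, rfl⟩
    calc _ ≤ fwdVal γ0 γ t (z t) + backVal γ t (z t) := add_le_add h1 h2
    _ ≤ _ := le_ciSup (Finite.bddAbove_range fun x => fwdVal γ0 γ t x + backVal γ t x) (z t)
end
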